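/- Generic step-down bound for k-FWER: in a step-down multiple testing procedure with test statistics T_j, j ∈ [p], and monotone critical values (c_K increasing in K), the k-FWER is bounded by the probability that the k-th largest test statistic among the true nulls exceeds the critical value computed from the set of true nulls: k-FWER ≤ P( k-max(T_j : j ∈ I) > c_I ), where I is the index set of true null hypotheses. -/

import Mathlib

open MeasureTheory Finset

/-- The `k`-th largest value among the coordinates `x j`, `j ∈ K`, of a vector `x ∈ ℝ^p`. -/
noncomputable def kthMaxOn {p : ℕ} (K : Finset (Fin p)) (k : ℕ) (x : Fin p → ℝ) : ℝ :=
  sSup {t : ℝ | k ≤ (K.filter fun j => t ≤ x j).card}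

/-- The step-down critical value used at active set `K` for `k`-FWER control
(Romano–Wolf Algorithm 2.1): the largest of the critical values `c (K ∪ S)` over all
augmentations `S` of `K` by at most `k - 1` previously rejected indices. -/
noncomputable def augCrit {p : ℕ} (c : Finset (Fin p) → ℝ) (k : ℕ)
    (K : Finset (Fin p)) : ℝ :=
  sSup {r : ℝ | ∃ S : Finset (Fin p), S ⊆ Finset.univ \ K ∧ S.card ≤ k - 1 ∧ r = c (K ∪ S)}

/-- The active (not-yet-rejected) set of hypotheses of the step-down procedure after `s`
steps: start from all `p` hypotheses, and at each step reject (remove) those whose test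
statistic exceeds the current critical value. -/
noncomputable def stepDownActive {p : ℕ} (T : Fin p → ℝ) (c : Finset (Fin p) → ℝ)
    (k : ℕ) : ℕ → Finset (Fin p)
  | 0 => Finset.univ
  | s + 1 => (stepDownActive T c k s).filter
      (fun j => T j ≤ augCrit c k (stepDownActive T c k s))

lemma augCrit_set_bddAbove {p : ℕ} (c : Finset (Fin p) → ℝ) (k : ℕ) (K : Finset (Fin p)) :
    BddAbove {r : ℝ | ∃ S : Finset (Fin p),
      S ⊆ Finset.univ \ K ∧ S.card ≤ k - 1 ∧ r = c (K ∪ S)} :=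
  ((Set.finite_range c).subset (by rintro r ⟨S, _, _, rfl⟩; exact ⟨_, rfl⟩)).bddAbove

lemma le_augCrit {p : ℕ} (c : Finset (Fin p) → ℝ) (k : ℕ) (K S : Finset (Fin p))
    (hS : S ⊆ Finset.univ \ K) (hcard : S.card ≤ k - 1) : c (K ∪ S) ≤ augCrit c k K :=
  le_csSup (augCrit_set_bddAbove c k K) ⟨S, hS, hcard, rfl⟩

lemma augCrit_mono {p : ℕ} (c : Finset (Fin p) → ℝ)
    (hmono : ∀ K K' : Finset (Fin p), K ⊆ K' → c K ≤ c K') (k : ℕ)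
    {K K' : Finset (Fin p)} (h : K ⊆ K') : augCrit c k K ≤ augCrit c k K' := by
  have hne : {r : ℝ | ∃ S : Finset (Fin p),
      S ⊆ Finset.univ \ K ∧ S.card ≤ k - 1 ∧ r = c (K ∪ S)}.Nonempty :=
    ⟨c (K ∪ ∅), ∅, by simp, by simp, rfl⟩
  apply csSup_le hne
  rintro r ⟨S, hS, hcard, rfl⟩
  calc c (K ∪ S) ≤ c (K' ∪ (S \ K')) := by
        apply hmono
        intro j hj
        rcases Finset.mem_union.mp hj with hj | hj
        · exact Finset.mem_union_left _ (h hj)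
        · by_cases hj' : j ∈ K'
          · exact Finset.mem_union_left _ hj'
          · exact Finset.mem_union_right _ (Finset.mem_sdiff.mpr ⟨hj, hj'⟩)
    _ ≤ augCrit c k K' := by
        apply le_augCrit
        · intro j hj
          simp only [Finset.mem_sdiff] at hj ⊢
          exact ⟨Finset.mem_univ _, hj.2⟩
        · exact le_trans (Finset.card_le_card (Finset.sdiff_subset)) hcard

lemma stepDownActive_antitone {p : ℕ} (T : Fin p → ℝ) (c : Finset (Fin p) → ℝ) (k : ℕ)
    (s : ℕ) : stepDownActive T c k (s + 1) ⊆ stepDownActive T c k s :=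
  Finset.filter_subset _ _

lemma stepDownActive_reject {p : ℕ} (T : Fin p → ℝ) (c : Finset (Fin p) → ℝ)
    (hmono : ∀ K K' : Finset (Fin p), K ⊆ K' → c K ≤ c K') (k : ℕ) :
    ∀ s (j : Fin p), j ∉ stepDownActive T c k (s + 1) →
      augCrit c k (stepDownActive T c k s) < T j := by
  intro s
  induction s with
  | zero =>
      intro j hj
      simp only [stepDownActive, Finset.mem_filter, Finset.mem_univ, true_and, not_le] at hj
      exact lt_of_not_ge fun h => hj (Finset.mem_filter.mpr ⟨Finset.mem_univ _, h⟩)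
  | succ s ih =>
      intro j hj
      rw [show stepDownActive T c k (s + 1 + 1)
          = (stepDownActive T c k (s+1)).filter
            (fun j => T j ≤ augCrit c k (stepDownActive T c k (s+1))) from rfl,
        Finset.mem_filter] at hj
      push_neg at hj
      by_cases hj' : j ∈ stepDownActive T c k (s + 1)
      · exact hj hj'
      · exact lt_of_le_of_lt
          (augCrit_mono c hmono k (stepDownActive_antitone T c k s)) (ih j hj')

/-- Generic step-down bound for the `k`-FWER: for the step-down procedure with test
statistics `T j` and monotone critical values `c K` (increasing in `K`), the probability
of rejecting `k` or more true nulls (indices in `I`) is bounded by the probability that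
the `k`-th largest statistic among the true nulls exceeds the critical value `c I`
computed from the set of true nulls. After `p` steps the procedure has terminated, so
the rejected set is `univ \ stepDownActive (T ω) c k p`. -/
theorem stepDown_kFWER_bound {Ω : Type*} [MeasurableSpace Ω]
    (μ : Measure Ω) [IsProbabilityMeasure μ]
    (p : ℕ) (T : Ω → Fin p → ℝ) (hT : Measurable T)
    (c : Finset (Fin p) → ℝ)
    (hmono : ∀ K K' : Finset (Fin p), K ⊆ K' → c K ≤ c K')
    (I : Finset (Fin p)) (k : ℕ) (hk1 : 1 ≤ k) (hkI : k ≤ I.card) :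
    μ {ω | k ≤ ((Finset.univ \ stepDownActive (T ω) c k p) ∩ I).card}
      ≤ μ {ω | c I < kthMaxOn I k (T ω)} := by
  apply measure_mono
  intro ω hω
  simp only [Set.mem_setOf_eq] at hω ⊢
  set x : Fin p → ℝ := T ω with hx
  set A : ℕ → Finset (Fin p) := stepDownActive x c k with hA
  -- p ≥ 1
  have hp : 1 ≤ p := by
    have h2 : I.card ≤ p := by simpa using Finset.card_le_univ I
    omega
  -- the property
  have hPex : ∃ s, k ≤ ((Finset.univ \ A (s + 1)) ∩ I).card := by
    refine ⟨p - 1, ?_⟩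
    have : p - 1 + 1 = p := Nat.succ_pred_eq_of_pos hp
    rw [this]
    exact hω
  classical
  set s := Nat.find hPex with hs
  have hPs : k ≤ ((Finset.univ \ A (s + 1)) ∩ I).card := Nat.find_spec hPex
  -- at step s, fewer than k true nulls rejected
  have hQ : ((Finset.univ \ A s) ∩ I).card ≤ k - 1 := by
    rcases Nat.eq_zero_or_pos s with h0 | hpos
    · rw [h0]
      have : (Finset.univ \ A 0) ∩ I = ∅ := by
        simp [hA, stepDownActive]
      rw [this]; simp
    · have := Nat.find_min hPex (show s - 1 < s from Nat.sub_lt hpos one_pos)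
      have hse : s - 1 + 1 = s := Nat.succ_pred_eq_of_pos hpos
      rw [hse] at this
      omega
  -- c I ≤ augCrit at step s
  have hIsub : (Finset.univ \ A s) ∩ I = I \ A s := by
    ext j; simp [Finset.mem_sdiff, and_comm]
  have hcle : c I ≤ augCrit c k (A s) := by
    have h1 : c I ≤ c (A s ∪ (I \ A s)) := by
      apply hmono
      intro j hj
      by_cases hj' : j ∈ A s
      · exact Finset.mem_union_left _ hj'
      · exact Finset.mem_union_right _ (Finset.mem_sdiff.mpr ⟨hj, hj'⟩)
    refine h1.trans (le_augCrit c k _ _ ?_ ?_)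
    · intro j hj
      simp only [Finset.mem_sdiff] at hj ⊢
      exact ⟨Finset.mem_univ _, hj.2⟩
    · rw [← hIsub]; exact hQ
  -- all rejected true nulls at step s+1 have T j > c I
  set J : Finset (Fin p) := (Finset.univ \ A (s + 1)) ∩ I with hJ
  have hJI : J ⊆ I := Finset.inter_subset_right
  have hJbig : ∀ j ∈ J, c I < x j := by
    intro j hj
    have hjn : j ∉ A (s + 1) := by
      simp only [hJ, Finset.mem_inter, Finset.mem_sdiff] at hj
      exact hj.1.2
    exact lt_of_le_of_lt hcle (stepDownActive_reject x c hmono k s j hjn)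
  have hJne : J.Nonempty := Finset.card_pos.mp (lt_of_lt_of_le hk1 hPs)
  have hIne : I.Nonempty := Finset.card_pos.mp (lt_of_lt_of_le hk1 hkI)
  -- conclude via kthMaxOn
  set t0 : ℝ := J.inf' hJne x with ht0
  have ht0mem : t0 ∈ {t : ℝ | k ≤ (I.filter fun j => t ≤ x j).card} := by
    have hsub : J ⊆ I.filter fun j => t0 ≤ x j := by
      intro j hj
      exact Finset.mem_filter.mpr ⟨hJI hj, Finset.inf'_le x hj⟩
    exact le_trans hPs (Finset.card_le_card hsub)
  have hbdd : BddAbove {t : ℝ | k ≤ (I.filter fun j => t ≤ x j).card} := by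
    refine ⟨I.sup' hIne x, ?_⟩
    intro t ht
    simp only [Set.mem_setOf_eq] at ht
    have : (I.filter fun j => t ≤ x j).Nonempty :=
      Finset.card_pos.mp (lt_of_lt_of_le hk1 ht)
    obtain ⟨j, hj⟩ := this
    have hj' := Finset.mem_filter.mp hj
    exact hj'.2.trans (Finset.le_sup' x hj'.1)
  have hle : t0 ≤ kthMaxOn I k x := le_csSup hbdd ht0mem
  obtain ⟨j0, hj0, hj0eq⟩ := Finset.exists_mem_eq_inf' hJne x
  have : c I < t0 := by rw [ht0, hj0eq]; exact hJbig j0 hj0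
  exact lt_of_lt_of_le this hle
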